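/- arXiv:2104.07822 — 5 statements merged into one kernel-verified Lean document; each statement's English description precedes it below -/
import Mathlib

section
/- Let π^R be defined by π^R(x) = 1{L(x) > 0} − 1{U(x) < 0} + 1{L(x) ≤ 0 ≤ U(x)}·π^b(x). Then for every x ∈ 𝒳 and every action a ∈ {−1,+1}, sup_{c ∈ [L(x),U(x)]} |c|·(1{π^R(x) ≠ sgn(c)} − 1{π^b(x) ≠ sgn(c)}) ≤ sup_{c ∈ [L(x),U(x)]} |c|·(1{a ≠ sgn(c)} − 1{π^b(x) ≠ sgn(c)}). Consequently, π^R minimizes π ↦ E[ sup_{c ∈ [L(X),U(X)]} |c|·(1{π(X) ≠ sgn(c)} − 1{π^b(X) ≠ sgn(c)}) ] over all ITRs π : 𝒳 → {−1,+1} for which this expectation is defined; that is, π^R is a risk-based IV-improved ITR when the policy class consists of all Boolean functions. (Proposition 1.) -/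
open MeasureTheory

noncomputable section

open Classical in
/-- Real-valued indicator `1{p}` of a proposition. -/
noncomputable def ind (p : Prop) : ℝ := if p then 1 else 0

/-- Sign function: `+1` for positive, `−1` for negative, `0` at zero. -/
noncomputable def sgn (c : ℝ) : ℝ := if 0 < c then 1 else if c < 0 then -1 else 0

/-- Worst-case excess risk of taking action `b` against the baseline action `b0`,
the supremum over CATE values `c ∈ [L, U]` of `|c|·(1{b ≠ sgn c} − 1{b0 ≠ sgn c})`. -/
noncomputable def worstExcess (L U b b0 : ℝ) : ℝ :=
  sSup ((fun c => |c| * (ind (b ≠ sgn c) - ind (b0 ≠ sgn c))) '' Set.Icc L U)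

/-- The risk-based IV-improved ITR
`π^R(x) = 1{L(x) > 0} − 1{U(x) < 0} + 1{L(x) ≤ 0 ≤ U(x)}·π^b(x)`. -/
noncomputable def piR {𝒳 : Type*} (L U πb : 𝒳 → ℝ) (x : 𝒳) : ℝ :=
  ind (0 < L x) - ind (U x < 0) + ind (L x ≤ 0 ∧ 0 ≤ U x) * πb x

lemma ind_nonneg (p : Prop) : 0 ≤ ind p := by unfold ind; split <;> norm_num

lemma ind_le_one (p : Prop) : ind p ≤ 1 := by unfold ind; split <;> norm_num

lemma worst_bdd (L U b b0 : ℝ) :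
    BddAbove ((fun c => |c| * (ind (b ≠ sgn c) - ind (b0 ≠ sgn c))) '' Set.Icc L U) := by
  refine ⟨max |L| |U|, ?_⟩
  rintro y ⟨c, hc, rfl⟩
  calc |c| * (ind (b ≠ sgn c) - ind (b0 ≠ sgn c)) ≤ |c| * 1 := by
        apply mul_le_mul_of_nonneg_left _ (abs_nonneg c)
        have h1 := ind_le_one (b ≠ sgn c)
        have h2 := ind_nonneg (b0 ≠ sgn c)
        linarith
    _ = |c| := mul_one _
    _ ≤ max |L| |U| := abs_le_max_abs_abs hc.1 hc.2

lemma worst_mono (L U b b' b0 : ℝ) (h : L ≤ U)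
    (hpt : ∀ c ∈ Set.Icc L U,
      |c| * (ind (b ≠ sgn c) - ind (b0 ≠ sgn c)) ≤
        |c| * (ind (b' ≠ sgn c) - ind (b0 ≠ sgn c))) :
    worstExcess L U b b0 ≤ worstExcess L U b' b0 := by
  apply csSup_le (((Set.nonempty_Icc).2 h).image _)
  rintro y ⟨c, hc, rfl⟩
  exact (hpt c hc).trans (le_csSup (worst_bdd L U b' b0) ⟨c, hc, rfl⟩)

lemma pointwise_min {𝒳 : Type*} (L U πb : 𝒳 → ℝ) (hLU : ∀ x, L x ≤ U x) (x : 𝒳) (a : ℝ) :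
    worstExcess (L x) (U x) (piR L U πb x) (πb x) ≤ worstExcess (L x) (U x) a (πb x) := by
  by_cases h1 : 0 < L x
  · have h2 : ¬ U x < 0 := by linarith [hLU x]
    have h3 : ¬ (L x ≤ 0 ∧ 0 ≤ U x) := fun h => by linarith [h.1]
    have hpiR : piR L U πb x = 1 := by simp [piR, ind, h1, h2, h3]
    rw [hpiR]
    apply worst_mono _ _ _ _ _ (hLU x)
    intro c hc
    have hpos : 0 < c := lt_of_lt_of_le h1 hc.1
    have hsgn : sgn c = 1 := by simp [sgn, hpos]
    rw [hsgn]
    apply mul_le_mul_of_nonneg_left _ (abs_nonneg c)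
    have h0 : ind ((1:ℝ) ≠ 1) = 0 := by simp [ind]
    rw [h0]
    linarith [ind_nonneg (a ≠ (1:ℝ))]
  · by_cases h2 : U x < 0
    · have h3 : ¬ (L x ≤ 0 ∧ 0 ≤ U x) := fun h => by linarith [h.2]
      have hpiR : piR L U πb x = -1 := by simp [piR, ind, h1, h2, h3]
      rw [hpiR]
      apply worst_mono _ _ _ _ _ (hLU x)
      intro c hc
      have hneg : c < 0 := lt_of_le_of_lt hc.2 h2
      have hnpos : ¬ 0 < c := by linarith
      have hsgn : sgn c = -1 := by simp [sgn, hnpos, hneg]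
      rw [hsgn]
      apply mul_le_mul_of_nonneg_left _ (abs_nonneg c)
      have h0 : ind ((-1:ℝ) ≠ -1) = 0 := by simp [ind]
      rw [h0]
      linarith [ind_nonneg (a ≠ (-1:ℝ))]
    · have hL0 : L x ≤ 0 := le_of_not_gt h1
      have hU0 : 0 ≤ U x := le_of_not_gt h2
      have hpiR : piR L U πb x = πb x := by simp [piR, ind, h1, h2, hL0, hU0]
      rw [hpiR]
      have hle : worstExcess (L x) (U x) (πb x) (πb x) ≤ 0 := by
        apply csSup_le (((Set.nonempty_Icc).2 (hLU x)).image _)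
        rintro y ⟨c, hc, rfl⟩
        simp
      have hge : 0 ≤ worstExcess (L x) (U x) a (πb x) := by
        apply le_csSup (worst_bdd _ _ _ _)
        exact ⟨0, ⟨hL0, hU0⟩, by simp⟩
      linarith

/-- Proposition 1: `π^R` pointwise minimizes the worst-case excess risk over actions
`a ∈ {−1,+1}`, and consequently minimizes the expected worst-case excess risk over all
Boolean ITRs for which the expectation is defined: it is a risk-based IV-improved ITR. -/
theorem risk_based_IV_improved_ITR
    {𝒳 : Type*} [MeasurableSpace 𝒳] (μ : Measure 𝒳) [IsProbabilityMeasure μ]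
    (L U πb : 𝒳 → ℝ)
    (hLU : ∀ x, L x ≤ U x)
    (hπb : ∀ x, πb x = 1 ∨ πb x = -1) :
    (∀ x, ∀ a : ℝ, a = 1 ∨ a = -1 →
        worstExcess (L x) (U x) (piR L U πb x) (πb x) ≤ worstExcess (L x) (U x) a (πb x))
    ∧
    (∀ π : 𝒳 → ℝ, (∀ x, π x = 1 ∨ π x = -1) →
        Integrable (fun x => worstExcess (L x) (U x) (piR L U πb x) (πb x)) μ →
        Integrable (fun x => worstExcess (L x) (U x) (π x) (πb x)) μ →
        ∫ x, worstExcess (L x) (U x) (piR L U πb x) (πb x) ∂μ ≤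
          ∫ x, worstExcess (L x) (U x) (π x) (πb x) ∂μ) := by
  constructor
  · intro x a _
    exact pointwise_min L U πb hLU x a
  · intro π _ hInt1 hInt2
    exact integral_mono hInt1 hInt2 fun x => pointwise_min L U πb hLU x (π x)

end
end

section
/- Define L^V(x) = Q̲(x,+1) − Q̄(x,−1) and U^V(x) = Q̄(x,+1) − Q̲(x,−1), and let π^V(x) = 1{L^V(x) > 0} − 1{U^V(x) < 0} + 1{L^V(x) ≤ 0 ≤ U^V(x)}·π^b(x). For an ITR π and x ∈ 𝒳, let W(π, x) denote the infimum, over p ∈ 𝒫_{x,π(x)} and p' ∈ 𝒫_{x,π^b(x)} with the requirement that p' = p whenever π(x) = π^b(x), of ∫ y dp(y) − ∫ y dp'(y); equivalently W(π,x) = 0 if π(x) = π^b(x) and W(π,x) = Q̲(x,π(x)) − Q̄(x,π^b(x)) otherwise. Then for every x ∈ 𝒳 and every ITR π, W(π, x) ≤ W(π^V, x); consequently π^V maximizes π ↦ E[W(π, X)] over all ITRs for which the expectation is defined, i.e., π^V is a value-based IV-improved ITR when the policy class consists of all Boolean functions. (Proposition 2.) -/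
open MeasureTheory

noncomputable section

/-- Mean `∫ y dp(y)` of a distribution on ℝ. -/
noncomputable def meanOf (p : Measure ℝ) : ℝ := ∫ y, y ∂p

/-- `Q̲(x,a) = inf_{p ∈ 𝒫_{x,a}} ∫ y dp(y)`. -/
noncomputable def Qlow {𝒳 : Type*} (P : 𝒳 → ℝ → Set (Measure ℝ)) (x : 𝒳) (a : ℝ) : ℝ :=
  sInf (meanOf '' P x a)

/-- `Q̄(x,a) = sup_{p ∈ 𝒫_{x,a}} ∫ y dp(y)`. -/
noncomputable def Qhigh {𝒳 : Type*} (P : 𝒳 → ℝ → Set (Measure ℝ)) (x : 𝒳) (a : ℝ) : ℝ :=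
  sSup (meanOf '' P x a)

/-- `W(π,x)`: the infimum over `p ∈ 𝒫_{x,π(x)}` and `p' ∈ 𝒫_{x,π^b(x)}` (with `p' = p`
required whenever `π(x) = π^b(x)`) of `∫ y dp − ∫ y dp'`. -/
noncomputable def Winf {𝒳 : Type*} (P : 𝒳 → ℝ → Set (Measure ℝ)) (πb : 𝒳 → ℝ)
    (π : 𝒳 → ℝ) (x : 𝒳) : ℝ :=
  sInf {v : ℝ | ∃ p ∈ P x (π x), ∃ p' ∈ P x (πb x),
    (π x = πb x → p' = p) ∧ v = meanOf p - meanOf p'}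

/-- The value-based IV-improved ITR `π^V`, built from
`L^V(x) = Q̲(x,+1) − Q̄(x,−1)` and `U^V(x) = Q̄(x,+1) − Q̲(x,−1)`:
`π^V(x) = 1{L^V(x) > 0} − 1{U^V(x) < 0} + 1{L^V(x) ≤ 0 ≤ U^V(x)}·π^b(x)`. -/
noncomputable def piV {𝒳 : Type*} (P : 𝒳 → ℝ → Set (Measure ℝ)) (πb : 𝒳 → ℝ) (x : 𝒳) : ℝ :=
  ind (0 < Qlow P x 1 - Qhigh P x (-1)) - ind (Qhigh P x 1 - Qlow P x (-1) < 0)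
    + ind (Qlow P x 1 - Qhigh P x (-1) ≤ 0 ∧ 0 ≤ Qhigh P x 1 - Qlow P x (-1)) * πb x

section Aux
variable {𝒳 : Type*} (P : 𝒳 → ℝ → Set (Measure ℝ)) (πb : 𝒳 → ℝ) (x : 𝒳)

/-- Cross-difference set for actions `a` (new) and `b` (baseline). -/
def Dset (a b : ℝ) : Set ℝ :=
  {v : ℝ | ∃ p ∈ P x a, ∃ p' ∈ P x b, v = meanOf p - meanOf p'}

lemma Qle (a : ℝ)
    (hL : ∃ p ∈ P x a, meanOf p = Qlow P x a)
    (hU : ∃ p ∈ P x a, meanOf p = Qhigh P x a) :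
    Qlow P x a ≤ Qhigh P x a := by
  obtain ⟨p, hp, hpe⟩ := hL
  obtain ⟨q, hq, hqe⟩ := hU
  by_cases hba : BddAbove (meanOf '' P x a)
  · calc Qlow P x a = meanOf p := hpe.symm
      _ ≤ Qhigh P x a := le_csSup hba ⟨p, hp, rfl⟩
  · have hQ : Qhigh P x a = 0 := Real.sSup_of_not_bddAbove hba
    rw [hQ]
    by_cases hbb : BddBelow (meanOf '' P x a)
    · have h1 : Qlow P x a ≤ meanOf q := csInf_le hbb ⟨q, hq, rfl⟩
      rw [hqe, hQ] at h1
      exact h1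
    · rw [Qlow, Real.sInf_of_not_bddBelow hbb]

lemma winf_congr (π π' : 𝒳 → ℝ) (h : π x = π' x) :
    Winf P πb π x = Winf P πb π' x := by
  simp only [Winf, h]

lemma winf_zero (π : 𝒳 → ℝ) (h : π x = πb x) (hne : (P x (πb x)).Nonempty) :
    Winf P πb π x = 0 := by
  have hset : {v : ℝ | ∃ p ∈ P x (π x), ∃ p' ∈ P x (πb x),
      (π x = πb x → p' = p) ∧ v = meanOf p - meanOf p'} = {0} := by
    ext v
    constructor
    · rintro ⟨p, hp, p', hp', hc, rfl⟩
      rw [hc h]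
      simp
    · rintro hv
      obtain ⟨p, hp⟩ := hne
      refine ⟨p, by rw [h]; exact hp, p, hp, fun _ => rfl, ?_⟩
      simpa using hv
  rw [Winf, hset, csInf_singleton]

lemma winf_ne (π : 𝒳 → ℝ) (h : π x ≠ πb x) :
    Winf P πb π x = sInf (Dset P x (π x) (πb x)) := by
  have hset : {v : ℝ | ∃ p ∈ P x (π x), ∃ p' ∈ P x (πb x),
      (π x = πb x → p' = p) ∧ v = meanOf p - meanOf p'} = Dset P x (π x) (πb x) := by
    ext v
    constructor
    · rintro ⟨p, hp, p', hp', _, rfl⟩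
      exact ⟨p, hp, p', hp', rfl⟩
    · rintro ⟨p, hp, p', hp', rfl⟩
      exact ⟨p, hp, p', hp', fun he => absurd he h, rfl⟩
  rw [Winf, hset]

lemma inf_le_zero (a b : ℝ)
    (hmemL : ∃ p ∈ P x a, meanOf p = Qlow P x a)
    (hmemU : ∃ p ∈ P x b, meanOf p = Qhigh P x b)
    (hle : Qlow P x a - Qhigh P x b ≤ 0) :
    sInf (Dset P x a b) ≤ 0 := by
  by_cases hbb : BddBelow (Dset P x a b)
  · obtain ⟨p, hp, hpe⟩ := hmemL
    obtain ⟨q, hq, hqe⟩ := hmemU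
    have hmem : Qlow P x a - Qhigh P x b ∈ Dset P x a b :=
      ⟨p, hp, q, hq, by rw [hpe, hqe]⟩
    exact le_trans (csInf_le hbb hmem) hle
  · rw [Real.sInf_of_not_bddBelow hbb]

lemma zero_le_inf (a b : ℝ)
    (hnea : (P x a).Nonempty) (hneb : (P x b).Nonempty)
    (hge : 0 ≤ Qlow P x a - Qhigh P x b) :
    0 ≤ sInf (Dset P x a b) := by
  by_cases hbb : BddBelow (Dset P x a b)
  · obtain ⟨p₀, hp₀⟩ := hnea
    obtain ⟨q₀, hq₀⟩ := hneb
    refine le_csInf ⟨meanOf p₀ - meanOf q₀, p₀, hp₀, q₀, hq₀, rfl⟩ ?_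
    rintro v ⟨p, hp, q, hq, rfl⟩
    obtain ⟨lb, hlb⟩ := hbb
    have hbbA : BddBelow (meanOf '' P x a) := by
      refine ⟨lb + meanOf q₀, ?_⟩
      rintro m ⟨r, hr, rfl⟩
      have := hlb ⟨r, hr, q₀, hq₀, rfl⟩
      linarith
    have hbaB : BddAbove (meanOf '' P x b) := by
      refine ⟨meanOf p₀ - lb, ?_⟩
      rintro m ⟨r, hr, rfl⟩
      have := hlb ⟨p₀, hp₀, r, hr, rfl⟩
      linarith
    have h1 : Qlow P x a ≤ meanOf p := csInf_le hbbA ⟨p, hp, rfl⟩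
    have h2 : meanOf q ≤ Qhigh P x b := le_csSup hbaB ⟨q, hq, rfl⟩
    linarith
  · rw [Real.sInf_of_not_bddBelow hbb]

lemma piV_pos (h : 0 < Qlow P x 1 - Qhigh P x (-1))
    (hLU : Qlow P x 1 - Qhigh P x (-1) ≤ Qhigh P x 1 - Qlow P x (-1)) :
    piV P πb x = 1 := by
  have h1 : ¬ (Qhigh P x 1 - Qlow P x (-1) < 0) := by linarith
  have h2 : ¬ (Qlow P x 1 - Qhigh P x (-1) ≤ 0 ∧ 0 ≤ Qhigh P x 1 - Qlow P x (-1)) :=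
    fun hc => absurd hc.1 (not_le.mpr h)
  simp only [piV, ind]
  rw [if_pos h, if_neg h1, if_neg h2]
  ring

lemma piV_neg (h : Qhigh P x 1 - Qlow P x (-1) < 0)
    (hLU : Qlow P x 1 - Qhigh P x (-1) ≤ Qhigh P x 1 - Qlow P x (-1)) :
    piV P πb x = -1 := by
  have h1 : ¬ (0 < Qlow P x 1 - Qhigh P x (-1)) := by linarith
  have h2 : ¬ (Qlow P x 1 - Qhigh P x (-1) ≤ 0 ∧ 0 ≤ Qhigh P x 1 - Qlow P x (-1)) :=
    fun hc => absurd hc.2 (not_le.mpr h)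
  simp only [piV, ind]
  rw [if_neg h1, if_pos h, if_neg h2]
  ring

lemma piV_base (h1 : Qlow P x 1 - Qhigh P x (-1) ≤ 0)
    (h2 : 0 ≤ Qhigh P x 1 - Qlow P x (-1)) :
    piV P πb x = πb x := by
  have h1' : ¬ (0 < Qlow P x 1 - Qhigh P x (-1)) := not_lt.mpr h1
  have h2' : ¬ (Qhigh P x 1 - Qlow P x (-1) < 0) := not_lt.mpr h2
  simp only [piV, ind]
  rw [if_neg h1', if_neg h2', if_pos ⟨h1, h2⟩]
  ring

lemma pointwise_le
    (hπb : ∀ x, πb x = 1 ∨ πb x = -1)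
    (hne : ∀ x, ∀ a : ℝ, a = 1 ∨ a = -1 → (P x a).Nonempty)
    (hattL : ∀ x, ∀ a : ℝ, a = 1 ∨ a = -1 → ∃ p ∈ P x a, meanOf p = Qlow P x a)
    (hattU : ∀ x, ∀ a : ℝ, a = 1 ∨ a = -1 → ∃ p ∈ P x a, meanOf p = Qhigh P x a)
    (π : 𝒳 → ℝ) (hπ : ∀ y, π y = 1 ∨ π y = -1) :
    Winf P πb π x ≤ Winf P πb (piV P πb) x := by
  have hQ1 : Qlow P x 1 ≤ Qhigh P x 1 :=
    Qle P x 1 (hattL x 1 (Or.inl rfl)) (hattU x 1 (Or.inl rfl))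
  have hQm : Qlow P x (-1) ≤ Qhigh P x (-1) :=
    Qle P x (-1) (hattL x (-1) (Or.inr rfl)) (hattU x (-1) (Or.inr rfl))
  have hLU : Qlow P x 1 - Qhigh P x (-1) ≤ Qhigh P x 1 - Qlow P x (-1) := by linarith
  have hneb : (P x (πb x)).Nonempty := hne x (πb x) (hπb x)
  by_cases hL : 0 < Qlow P x 1 - Qhigh P x (-1)
  · have hpv : piV P πb x = 1 := piV_pos P πb x hL hLU
    rcases hπb x with hb | hb
    · rw [winf_zero P πb x (piV P πb) (by rw [hpv, hb]) hneb]
      rcases hπ x with ha | ha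
      · rw [winf_zero P πb x π (by rw [ha, hb]) hneb]
      · rw [winf_ne P πb x π (by rw [ha, hb]; norm_num), ha, hb]
        exact inf_le_zero P x (-1) 1 (hattL x (-1) (Or.inr rfl)) (hattU x 1 (Or.inl rfl))
          (by linarith)
    · rcases hπ x with ha | ha
      · exact le_of_eq (winf_congr P πb x π (piV P πb) (by rw [ha, hpv]))
      · rw [winf_zero P πb x π (by rw [ha, hb]) hneb,
          winf_ne P πb x (piV P πb) (by rw [hpv, hb]; norm_num), hpv, hb]
        exact zero_le_inf P x 1 (-1) (hne x 1 (Or.inl rfl)) (hne x (-1) (Or.inr rfl))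
          (le_of_lt hL)
  · by_cases hU : Qhigh P x 1 - Qlow P x (-1) < 0
    · have hpv : piV P πb x = -1 := piV_neg P πb x hU hLU
      rcases hπb x with hb | hb
      · rcases hπ x with ha | ha
        · rw [winf_zero P πb x π (by rw [ha, hb]) hneb,
            winf_ne P πb x (piV P πb) (by rw [hpv, hb]; norm_num), hpv, hb]
          exact zero_le_inf P x (-1) 1 (hne x (-1) (Or.inr rfl)) (hne x 1 (Or.inl rfl))
            (by linarith)
        · exact le_of_eq (winf_congr P πb x π (piV P πb) (by rw [ha, hpv]))
      · rw [winf_zero P πb x (piV P πb) (by rw [hpv, hb]) hneb]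
        rcases hπ x with ha | ha
        · rw [winf_ne P πb x π (by rw [ha, hb]; norm_num), ha, hb]
          exact inf_le_zero P x 1 (-1) (hattL x 1 (Or.inl rfl)) (hattU x (-1) (Or.inr rfl))
            (by linarith [not_lt.mp hL])
        · rw [winf_zero P πb x π (by rw [ha, hb]) hneb]
    · push_neg at hL hU
      have hpv : piV P πb x = πb x := piV_base P πb x hL hU
      rw [winf_zero P πb x (piV P πb) hpv hneb]
      by_cases hab : π x = πb x
      · rw [winf_zero P πb x π hab hneb]
      · rw [winf_ne P πb x π hab]
        rcases hπb x with hb | hb <;> rcases hπ x with ha | ha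
        · exact absurd (ha.trans hb.symm) hab
        · rw [ha, hb]
          exact inf_le_zero P x (-1) 1 (hattL x (-1) (Or.inr rfl)) (hattU x 1 (Or.inl rfl))
            (by linarith)
        · rw [ha, hb]
          exact inf_le_zero P x 1 (-1) (hattL x 1 (Or.inl rfl)) (hattU x (-1) (Or.inr rfl))
            (by linarith)
        · exact absurd (ha.trans hb.symm) hab

end Aux

/-- Proposition 2: assuming the partial-identification bounds `Q̲(x,a)`, `Q̄(x,a)` are
attained by elements of `𝒫_{x,a}`, the ITR `π^V` pointwise maximizes `W(π,x)`, and
consequently maximizes `π ↦ E[W(π,X)]` over all Boolean ITRs for which the expectation is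
defined: it is a value-based IV-improved ITR. -/
theorem value_based_IV_improved_ITR
    {𝒳 : Type*} [MeasurableSpace 𝒳] (μ : Measure 𝒳) [IsProbabilityMeasure μ]
    (P : 𝒳 → ℝ → Set (Measure ℝ)) (πb : 𝒳 → ℝ)
    (hπb : ∀ x, πb x = 1 ∨ πb x = -1)
    (hne : ∀ x, ∀ a : ℝ, a = 1 ∨ a = -1 → (P x a).Nonempty)
    (hprob : ∀ x, ∀ a : ℝ, a = 1 ∨ a = -1 → ∀ p ∈ P x a, IsProbabilityMeasure p)
    (hmom : ∀ x, ∀ a : ℝ, a = 1 ∨ a = -1 → ∀ p ∈ P x a, Integrable (fun y : ℝ => y) p)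
    (hattL : ∀ x, ∀ a : ℝ, a = 1 ∨ a = -1 → ∃ p ∈ P x a, meanOf p = Qlow P x a)
    (hattU : ∀ x, ∀ a : ℝ, a = 1 ∨ a = -1 → ∃ p ∈ P x a, meanOf p = Qhigh P x a) :
    (∀ x, ∀ π : 𝒳 → ℝ, (∀ y, π y = 1 ∨ π y = -1) →
        Winf P πb π x ≤ Winf P πb (piV P πb) x)
    ∧
    (∀ π : 𝒳 → ℝ, (∀ x, π x = 1 ∨ π x = -1) →
        Integrable (fun x => Winf P πb π x) μ →
        Integrable (fun x => Winf P πb (piV P πb) x) μ →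
        ∫ x, Winf P πb π x ∂μ ≤ ∫ x, Winf P πb (piV P πb) x ∂μ) := by
  refine ⟨fun x π hπ => pointwise_le P πb x hπb hne hattL hattU π hπ, ?_⟩
  intro π hπ h1 h2
  exact integral_mono h1 h2 (fun x => pointwise_le P πb x hπb hne hattL hattU π hπ)

end
end

section
/- Fix a DTR π and weighting functions {λ_k(h⃗_k, a_k) ∈ [0,1]}. Assume that all the infima and suprema appearing in the recursive definitions of the weighted Q- and value functions for π are attained by elements of the corresponding constrained sets 𝒫_{h⃗_k,a_k}. Then there exists a collection of prior distributions {𝒫r_{h⃗_k,a_k}} — each a two-point distribution on 𝒫_{h⃗_k,a_k} placing mass λ_k(h⃗_k,a_k) on a worst-case witness and mass 1 − λ_k(h⃗_k,a_k) on a best-case witness — such that Q^π_{λ,k} = Q^π_{𝒫,k} and V^π_{λ,k} = V^π_{𝒫,k} for every k ∈ {1,…,K}. (Proposition 3, Part 1.) -/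
open MeasureTheory

noncomputable section

section DTR

/- Multi-stage setup: histories `H k` for stage indices `k = 0, …, K-1`
(stage `k+1` of the paper); `H K` is the terminal (post-trajectory) type.
New covariates arising after stage `k` live in `X (k+1)`, and
`concat k h a r x` is the concatenated history `(h⃗_k, a_k, r_k, x_{k+1})`.
`P k h a` is the IV-constrained set of joint laws of `(R_k, X_{k+1})`.
At the last stage the new covariate is a null quantity that is simply ignored
(the terminal value function is identically `0`). -/
variable (X : ℕ → Type) [∀ k, MeasurableSpace (X k)]
variable (H : ℕ → Type)
variable (concat : ∀ k, H k → ℝ → ℝ → X (k + 1) → H (k + 1))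
variable (P : ∀ k, H k → ℝ → Set (Measure (ℝ × X (k + 1))))

/-- `∫ (r + V'(h⃗_k, a, r, x)) dp(r,x)` for a continuation value `V'`. -/
noncomputable def contInt (k : ℕ) (h : H k) (a : ℝ) (V' : H (k + 1) → ℝ)
    (p : Measure (ℝ × X (k + 1))) : ℝ :=
  ∫ q, (q.1 + V' (concat k h a q.1 q.2)) ∂p

/-- Worst-case `Q`-function `Q̲(h⃗_k, a)` given continuation value `V'`. -/
noncomputable def QLow (k : ℕ) (h : H k) (a : ℝ) (V' : H (k + 1) → ℝ) : ℝ :=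
  sInf (contInt X H concat k h a V' '' P k h a)

/-- Best-case `Q`-function `Q̄(h⃗_k, a)` given continuation value `V'`. -/
noncomputable def QHigh (k : ℕ) (h : H k) (a : ℝ) (V' : H (k + 1) → ℝ) : ℝ :=
  sSup (contInt X H concat k h a V' '' P k h a)

/-- Weighted value function, defined by backward induction with `fuel` stages to go. -/
noncomputable def wVal (lam : ∀ k, H k → ℝ → ℝ) (π : ∀ k, H k → ℝ) :
    (fuel : ℕ) → (k : ℕ) → H k → ℝ
  | 0, _, _ => 0
  | fuel + 1, k, h =>
      lam k h (π k h) * QLow X H concat P k h (π k h) (wVal lam π fuel (k + 1))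
        + (1 - lam k h (π k h)) * QHigh X H concat P k h (π k h) (wVal lam π fuel (k + 1))

/-- Weighted value function `V^π_{λ,k}` in a `K`-stage problem (stages `k = 0, …, K-1`). -/
noncomputable def wV (K : ℕ) (lam : ∀ k, H k → ℝ → ℝ) (π : ∀ k, H k → ℝ)
    (k : ℕ) (h : H k) : ℝ :=
  wVal X H concat P lam π (K - k) k h

/-- Weighted `Q`-function `Q^π_{λ,k}(h⃗_k, a)`. -/
noncomputable def wQ (K : ℕ) (lam : ∀ k, H k → ℝ → ℝ) (π : ∀ k, H k → ℝ)
    (k : ℕ) (h : H k) (a : ℝ) : ℝ :=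
  lam k h a * QLow X H concat P k h a (wV X H concat P K lam π (k + 1))
    + (1 - lam k h a) * QHigh X H concat P k h a (wV X H concat P K lam π (k + 1))

/-- Weighted contrast `𝒞^π_{λ,k}(h⃗_k) = Q^π_{λ,k}(h⃗_k,+1) − Q^π_{λ,k}(h⃗_k,−1)`. -/
noncomputable def wC (K : ℕ) (lam : ∀ k, H k → ℝ → ℝ) (π : ∀ k, H k → ℝ)
    (k : ℕ) (h : H k) : ℝ :=
  wQ X H concat P K lam π k h 1 - wQ X H concat P K lam π k h (-1)

end DTR


section Priors

variable (X : ℕ → Type) [∀ k, MeasurableSpace (X k)]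
variable (H : ℕ → Type)
variable (concat : ∀ k, H k → ℝ → ℝ → X (k + 1) → H (k + 1))

/-- IV-constrained value function under priors `Pr` over distributions, by backward
induction with `fuel` stages to go:
`V^π_{𝒫,k}(h⃗_k) = E_{p ∼ 𝒫r_{h⃗_k, π_k(h⃗_k)}}[∫ (r + V^π_{𝒫,k+1}(h⃗_k, π_k(h⃗_k), r, x)) dp]`. -/
noncomputable def cVal (Pr : ∀ k, H k → ℝ → Measure (Measure (ℝ × X (k + 1))))
    (π : ∀ k, H k → ℝ) : (fuel : ℕ) → (k : ℕ) → H k → ℝ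
  | 0, _, _ => 0
  | fuel + 1, k, h =>
      ∫ p, contInt X H concat k h (π k h) (cVal Pr π fuel (k + 1)) p ∂(Pr k h (π k h))

/-- IV-constrained value function `V^π_{𝒫,k}` in a `K`-stage problem. -/
noncomputable def cV (K : ℕ) (Pr : ∀ k, H k → ℝ → Measure (Measure (ℝ × X (k + 1))))
    (π : ∀ k, H k → ℝ) (k : ℕ) (h : H k) : ℝ :=
  cVal X H concat Pr π (K - k) k h

/-- IV-constrained `Q`-function `Q^π_{𝒫,k}(h⃗_k, a)`. -/
noncomputable def cQ (K : ℕ) (Pr : ∀ k, H k → ℝ → Measure (Measure (ℝ × X (k + 1))))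
    (π : ∀ k, H k → ℝ) (k : ℕ) (h : H k) (a : ℝ) : ℝ :=
  ∫ p, contInt X H concat k h a (cV X H concat K Pr π (k + 1)) p ∂(Pr k h a)

end Priors

/-- Integral against a two-point measure `c·δ_x + (1-c)·δ_y`. -/
lemma two_point_integral {α : Type*} [MeasurableSpace α] (f : α → ℝ) (hf : Measurable f)
    (x y : α) (c : ℝ) (hc0 : 0 ≤ c) (hc1 : c ≤ 1) :
    ∫ z, f z ∂(ENNReal.ofReal c • Measure.dirac x + ENNReal.ofReal (1 - c) • Measure.dirac y)
      = c * f x + (1 - c) * f y := by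
  have hdir : ∀ w : α, Integrable f (Measure.dirac w) := by
    intro w
    have hs : MeasurableSet (f ⁻¹' {f w}) := hf (measurableSet_singleton (f w))
    have hae : f =ᵐ[Measure.dirac w] fun _ => f w := by
      rw [Filter.EventuallyEq, ae_iff]
      have hset : {z | ¬ f z = f w} = (f ⁻¹' {f w})ᶜ := by ext z; simp
      rw [hset, Measure.dirac_apply' _ hs.compl]
      simp
    exact (integrable_const (f w)).congr hae.symm
  have h1 : Integrable f (ENNReal.ofReal c • Measure.dirac x) :=
    (hdir x).smul_measure ENNReal.ofReal_ne_top
  have h2 : Integrable f (ENNReal.ofReal (1 - c) • Measure.dirac y) :=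
    (hdir y).smul_measure ENNReal.ofReal_ne_top
  rw [integral_add_measure h1 h2, integral_smul_measure, integral_smul_measure,
    integral_dirac' f x hf.stronglyMeasurable, integral_dirac' f y hf.stronglyMeasurable,
    ENNReal.toReal_ofReal hc0, ENNReal.toReal_ofReal (by linarith)]
  simp [smul_eq_mul]

/-- Proposition 3, Part 1 (weighted ⟹ IV-constrained): fix a DTR `π` and weighting functions
`λ_k ∈ [0,1]`, and assume all the infima and suprema in the recursive definitions of the
weighted Q- and value functions are attained by elements of the constrained sets. Then there
is a collection of priors — each a two-point distribution on `𝒫_{h⃗_k,a_k}` putting mass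
`λ_k(h⃗_k,a_k)` on a worst-case witness and mass `1 − λ_k(h⃗_k,a_k)` on a best-case witness —
under which the IV-constrained Q- and value functions coincide with the weighted ones at
every stage. -/
theorem weighted_eq_IV_constrained_of_attained
    (X : ℕ → Type) [∀ k, MeasurableSpace (X k)] (H : ℕ → Type)
    (concat : ∀ k, H k → ℝ → ℝ → X (k + 1) → H (k + 1))
    (P : ∀ k, H k → ℝ → Set (Measure (ℝ × X (k + 1))))
    (K : ℕ) (hK : 1 ≤ K)
    (lam : ∀ k, H k → ℝ → ℝ)
    (hlam : ∀ k (h : H k) (a : ℝ), 0 ≤ lam k h a ∧ lam k h a ≤ 1)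
    (hPne : ∀ k (h : H k) (a : ℝ), a = 1 ∨ a = -1 → (P k h a).Nonempty)
    (hPprob : ∀ k (h : H k) (a : ℝ), ∀ p ∈ P k h a, IsProbabilityMeasure p)
    (hInt : ∀ (π : ∀ k, H k → ℝ) k (h : H k) (a : ℝ), ∀ p ∈ P k h a,
      Integrable (fun q : ℝ × X (k + 1) =>
        q.1 + wV X H concat P K lam π (k + 1) (concat k h a q.1 q.2)) p)
    (hBddB : ∀ (π : ∀ k, H k → ℝ) k (h : H k) (a : ℝ),
      BddBelow (contInt X H concat k h a (wV X H concat P K lam π (k + 1)) '' P k h a))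
    (hBddA : ∀ (π : ∀ k, H k → ℝ) k (h : H k) (a : ℝ),
      BddAbove (contInt X H concat k h a (wV X H concat P K lam π (k + 1)) '' P k h a))
    -- the fixed DTR `π`
    (π : ∀ k, H k → ℝ) (hπ : ∀ k (h : H k), π k h = 1 ∨ π k h = -1)
    -- the maps `p ↦ ∫ ⋯ dp` are measurable
    (hmeas : ∀ k (h : H k) (a : ℝ),
      Measurable (fun p : Measure (ℝ × X (k + 1)) =>
        contInt X H concat k h a (wV X H concat P K lam π (k + 1)) p))
    -- all infima and suprema in the recursive definitions of the weighted Q- and value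
    -- functions are attained by elements of the constrained sets
    (hattL : ∀ k (h : H k) (a : ℝ), a = 1 ∨ a = -1 → k < K →
      ∃ p ∈ P k h a, contInt X H concat k h a (wV X H concat P K lam π (k + 1)) p
        = QLow X H concat P k h a (wV X H concat P K lam π (k + 1)))
    (hattU : ∀ k (h : H k) (a : ℝ), a = 1 ∨ a = -1 → k < K →
      ∃ p ∈ P k h a, contInt X H concat k h a (wV X H concat P K lam π (k + 1)) p
        = QHigh X H concat P k h a (wV X H concat P K lam π (k + 1))) :
    ∃ Pr : ∀ k, H k → ℝ → Measure (Measure (ℝ × X (k + 1))),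
      (∀ k (h : H k) (a : ℝ), a = 1 ∨ a = -1 → k < K →
        ∃ pl ∈ P k h a, ∃ ph ∈ P k h a,
          Pr k h a = ENNReal.ofReal (lam k h a) • Measure.dirac pl
              + ENNReal.ofReal (1 - lam k h a) • Measure.dirac ph
          ∧ contInt X H concat k h a (wV X H concat P K lam π (k + 1)) pl
              = QLow X H concat P k h a (wV X H concat P K lam π (k + 1))
          ∧ contInt X H concat k h a (wV X H concat P K lam π (k + 1)) ph
              = QHigh X H concat P k h a (wV X H concat P K lam π (k + 1)))
      ∧ (∀ k (h : H k), wV X H concat P K lam π k h = cV X H concat K Pr π k h)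
      ∧ (∀ k, k < K → ∀ (h : H k) (a : ℝ), a = 1 ∨ a = -1 →
          wQ X H concat P K lam π k h a = cQ X H concat K Pr π k h a) := by
  classical
  let pl : ∀ k, H k → ℝ → Measure (ℝ × X (k + 1)) := fun k h a =>
    if hc : (a = 1 ∨ a = -1) ∧ k < K then (hattL k h a hc.1 hc.2).choose else 0
  let ph : ∀ k, H k → ℝ → Measure (ℝ × X (k + 1)) := fun k h a =>
    if hc : (a = 1 ∨ a = -1) ∧ k < K then (hattU k h a hc.1 hc.2).choose else 0
  have hplspec : ∀ k (h : H k) (a : ℝ), ∀ hc : (a = 1 ∨ a = -1) ∧ k < K,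
      pl k h a ∈ P k h a ∧
      contInt X H concat k h a (wV X H concat P K lam π (k + 1)) (pl k h a)
        = QLow X H concat P k h a (wV X H concat P K lam π (k + 1)) := by
    intro k h a hc
    simp only [pl, dif_pos hc]
    exact (hattL k h a hc.1 hc.2).choose_spec
  have hphspec : ∀ k (h : H k) (a : ℝ), ∀ hc : (a = 1 ∨ a = -1) ∧ k < K,
      ph k h a ∈ P k h a ∧
      contInt X H concat k h a (wV X H concat P K lam π (k + 1)) (ph k h a)
        = QHigh X H concat P k h a (wV X H concat P K lam π (k + 1)) := by
    intro k h a hc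
    simp only [ph, dif_pos hc]
    exact (hattU k h a hc.1 hc.2).choose_spec
  refine ⟨fun k h a => ENNReal.ofReal (lam k h a) • Measure.dirac (pl k h a)
      + ENNReal.ofReal (1 - lam k h a) • Measure.dirac (ph k h a), ?_, ?_⟩
  · intro k h a ha hk
    exact ⟨pl k h a, (hplspec k h a ⟨ha, hk⟩).1, ph k h a, (hphspec k h a ⟨ha, hk⟩).1,
      rfl, (hplspec k h a ⟨ha, hk⟩).2, (hphspec k h a ⟨ha, hk⟩).2⟩
  have hint : ∀ k (h : H k) (a : ℝ), (a = 1 ∨ a = -1) → k < K →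
      (∫ p, contInt X H concat k h a (wV X H concat P K lam π (k + 1)) p
        ∂(ENNReal.ofReal (lam k h a) • Measure.dirac (pl k h a)
          + ENNReal.ofReal (1 - lam k h a) • Measure.dirac (ph k h a)))
      = lam k h a * QLow X H concat P k h a (wV X H concat P K lam π (k + 1))
        + (1 - lam k h a) * QHigh X H concat P k h a (wV X H concat P K lam π (k + 1)) := by
    intro k h a ha hk
    rw [two_point_integral _ (hmeas k h a) _ _ _ (hlam k h a).1 (hlam k h a).2,
      (hplspec k h a ⟨ha, hk⟩).2, (hphspec k h a ⟨ha, hk⟩).2]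
  have hVal : ∀ fuel k, K - k = fuel → ∀ h : H k,
      wVal X H concat P lam π fuel k h
        = cVal X H concat (fun k h a => ENNReal.ofReal (lam k h a) • Measure.dirac (pl k h a)
            + ENNReal.ofReal (1 - lam k h a) • Measure.dirac (ph k h a)) π fuel k h := by
    intro fuel
    induction fuel with
    | zero => intro k _ h; simp [wVal, cVal]
    | succ n ih =>
      intro k hk h
      have hkK : k < K := by omega
      have hk1 : K - (k + 1) = n := by omega
      have hfun1 : wVal X H concat P lam π n (k + 1) = wV X H concat P K lam π (k + 1) := by
        funext h'; unfold wV; rw [hk1]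
      have hfun2 : cVal X H concat (fun k h a => ENNReal.ofReal (lam k h a)
            • Measure.dirac (pl k h a)
            + ENNReal.ofReal (1 - lam k h a) • Measure.dirac (ph k h a)) π n (k + 1)
          = wV X H concat P K lam π (k + 1) := by
        funext h'; rw [← ih (k + 1) hk1 h', ← hfun1]
      show lam k h (π k h) * QLow X H concat P k h (π k h) (wVal X H concat P lam π n (k + 1))
          + (1 - lam k h (π k h)) * QHigh X H concat P k h (π k h)
              (wVal X H concat P lam π n (k + 1))
        = _
      rw [hfun1]
      show _ = ∫ p, contInt X H concat k h (π k h)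
          (cVal X H concat _ π n (k + 1)) p ∂_
      rw [hfun2, hint k h (π k h) (hπ k h) hkK]
  constructor
  · intro k h
    unfold wV cV
    exact hVal (K - k) k rfl h
  · intro k hk h a ha
    have hfun2 : cV X H concat K (fun k h a => ENNReal.ofReal (lam k h a)
          • Measure.dirac (pl k h a)
          + ENNReal.ofReal (1 - lam k h a) • Measure.dirac (ph k h a)) π (k + 1)
        = wV X H concat P K lam π (k + 1) := by
      funext h'; unfold cV wV
      exact (hVal (K - (k + 1)) (k + 1) rfl h').symm
    unfold wQ cQ
    rw [hfun2, hint k h a ha hk]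

end
end

section
/- Assume all infima and suprema appearing in the recursive definitions of the weighted Q- and value functions are attained by elements of the constrained sets. Define π* recursively for k = K, K−1, …, 1 by π*_k(h⃗_k) = sgn(𝒞^{π*}_{λ,k}(h⃗_k)) whenever 𝒞^{π*}_{λ,k}(h⃗_k) ≠ 0, with an arbitrary choice in {−1,+1} when 𝒞^{π*}_{λ,k}(h⃗_k) = 0 (well-defined since 𝒞^{π*}_{λ,k} depends on π* only through π*_{(k+1):K}). Then for every stage k ∈ {1,…,K}, every history h⃗_k ∈ 𝓗_k, and every DTR π, V^{π*}_{λ,k}(h⃗_k) ≥ V^π_{λ,k}(h⃗_k); in particular π* is an IV-optimal DTR when the policy class consists of all DTRs. (Corollary 1: alternative characterization of the IV-optimal DTR.) -/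
open MeasureTheory

noncomputable section

/-- Corollary 1 (alternative characterization of the IV-optimal DTR): assuming all infima and
suprema in the recursive definitions of the weighted Q- and value functions are attained,
any DTR `π⋆` taking the sign of its own weighted contrast at every stage (with an arbitrary
choice in `{−1,+1}` on ties) maximizes the weighted value function at every stage `k` and
every history, over all (Boolean) DTRs. -/
theorem alternative_characterization_IV_optimal_DTR
    (X : ℕ → Type) [∀ k, MeasurableSpace (X k)] (H : ℕ → Type)
    (concat : ∀ k, H k → ℝ → ℝ → X (k + 1) → H (k + 1))
    (P : ∀ k, H k → ℝ → Set (Measure (ℝ × X (k + 1))))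
    (K : ℕ) (hK : 1 ≤ K)
    (lam : ∀ k, H k → ℝ → ℝ)
    (hlam : ∀ k (h : H k) (a : ℝ), 0 ≤ lam k h a ∧ lam k h a ≤ 1)
    (hPne : ∀ k (h : H k) (a : ℝ), a = 1 ∨ a = -1 → (P k h a).Nonempty)
    (hPprob : ∀ k (h : H k) (a : ℝ), ∀ p ∈ P k h a, IsProbabilityMeasure p)
    (hInt : ∀ (π : ∀ k, H k → ℝ) k (h : H k) (a : ℝ), ∀ p ∈ P k h a,
      Integrable (fun q : ℝ × X (k + 1) =>
        q.1 + wV X H concat P K lam π (k + 1) (concat k h a q.1 q.2)) p)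
    (hBddB : ∀ (π : ∀ k, H k → ℝ) k (h : H k) (a : ℝ),
      BddBelow (contInt X H concat k h a (wV X H concat P K lam π (k + 1)) '' P k h a))
    (hBddA : ∀ (π : ∀ k, H k → ℝ) k (h : H k) (a : ℝ),
      BddAbove (contInt X H concat k h a (wV X H concat P K lam π (k + 1)) '' P k h a))
    -- attainment of all infima and suprema in the recursive definitions
    (hattL : ∀ (π : ∀ k, H k → ℝ) k (h : H k) (a : ℝ), a = 1 ∨ a = -1 → k < K →
      ∃ p ∈ P k h a, contInt X H concat k h a (wV X H concat P K lam π (k + 1)) p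
        = QLow X H concat P k h a (wV X H concat P K lam π (k + 1)))
    (hattU : ∀ (π : ∀ k, H k → ℝ) k (h : H k) (a : ℝ), a = 1 ∨ a = -1 → k < K →
      ∃ p ∈ P k h a, contInt X H concat k h a (wV X H concat P K lam π (k + 1)) p
        = QHigh X H concat P k h a (wV X H concat P K lam π (k + 1)))
    -- `π⋆` takes the sign of its own weighted contrast, arbitrary in `{−1,+1}` on ties
    (πstar : ∀ k, H k → ℝ)
    (hπstar_pm : ∀ k (h : H k), πstar k h = 1 ∨ πstar k h = -1)
    (hπstar_sgn : ∀ k, k < K → ∀ h : H k,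
      (0 < wC X H concat P K lam πstar k h → πstar k h = 1) ∧
      (wC X H concat P K lam πstar k h < 0 → πstar k h = -1)) :
    ∀ k, k < K → ∀ h : H k, ∀ π : ∀ j, H j → ℝ,
      (∀ j (hj : H j), π j hj = 1 ∨ π j hj = -1) →
      wV X H concat P K lam π k h ≤ wV X H concat P K lam πstar k h := by
  have main : ∀ n k, K - k = n → k < K → ∀ (h : H k) (π : ∀ j, H j → ℝ),
      (∀ j (hj : H j), π j hj = 1 ∨ π j hj = -1) →
      wV X H concat P K lam π k h ≤ wV X H concat P K lam πstar k h := by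
    intro n
    induction n with
    | zero => intro k hn hk; omega
    | succ n ih =>
      intro k hn hk h π hπ
      -- continuation values are dominated
      have hVle : ∀ h' : H (k + 1),
          wV X H concat P K lam π (k + 1) h' ≤ wV X H concat P K lam πstar (k + 1) h' := by
        intro h'
        by_cases hk1 : k + 1 < K
        · exact ih (k + 1) (by omega) hk1 h' π hπ
        · have hEK : K - (k + 1) = 0 := by omega
          unfold wV
          rw [hEK]
          simp [wVal]
      -- monotonicity of weighted Q in the continuation value
      have hmono : ∀ a : ℝ, a = 1 ∨ a = -1 →
          wQ X H concat P K lam π k h a ≤ wQ X H concat P K lam πstar k h a := by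
        intro a ha
        have hci : ∀ p ∈ P k h a,
            contInt X H concat k h a (wV X H concat P K lam π (k + 1)) p
              ≤ contInt X H concat k h a (wV X H concat P K lam πstar (k + 1)) p := by
          intro p hp
          unfold contInt
          exact integral_mono (hInt π k h a p hp) (hInt πstar k h a p hp)
            (fun q => add_le_add_right (hVle _) _)
        have hL : QLow X H concat P k h a (wV X H concat P K lam π (k + 1))
            ≤ QLow X H concat P k h a (wV X H concat P K lam πstar (k + 1)) := by
          apply le_csInf ((hPne k h a ha).image _)
          rintro _ ⟨p, hp, rfl⟩
          exact le_trans (csInf_le (hBddB π k h a) ⟨p, hp, rfl⟩) (hci p hp)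
        have hH : QHigh X H concat P k h a (wV X H concat P K lam π (k + 1))
            ≤ QHigh X H concat P k h a (wV X H concat P K lam πstar (k + 1)) := by
          apply csSup_le ((hPne k h a ha).image _)
          rintro _ ⟨p, hp, rfl⟩
          exact le_trans (hci p hp) (le_csSup (hBddA πstar k h a) ⟨p, hp, rfl⟩)
        have hl := hlam k h a
        unfold wQ
        have h1 : lam k h a * QLow X H concat P k h a (wV X H concat P K lam π (k + 1))
            ≤ lam k h a * QLow X H concat P k h a (wV X H concat P K lam πstar (k + 1)) :=
          mul_le_mul_of_nonneg_left hL hl.1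
        have h2 : (1 - lam k h a) * QHigh X H concat P k h a (wV X H concat P K lam π (k + 1))
            ≤ (1 - lam k h a) * QHigh X H concat P k h a (wV X H concat P K lam πstar (k + 1)) :=
          mul_le_mul_of_nonneg_left hH (by linarith [hl.2])
        linarith
      -- π⋆ picks the better action
      have hstep : wQ X H concat P K lam πstar k h (π k h)
          ≤ wQ X H concat P K lam πstar k h (πstar k h) := by
        have hcdef : wC X H concat P K lam πstar k h
            = wQ X H concat P K lam πstar k h 1 - wQ X H concat P K lam πstar k h (-1) := rfl
        rcases lt_trichotomy (wC X H concat P K lam πstar k h) 0 with hc | hc | hc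
        · rw [(hπstar_sgn k hk h).2 hc]
          rcases hπ k h with hp1 | hp1 <;> rw [hp1]
          rw [hcdef] at hc; linarith
        · have : wQ X H concat P K lam πstar k h 1 = wQ X H concat P K lam πstar k h (-1) := by
            rw [hcdef] at hc; linarith
          rcases hπ k h with hp1 | hp1 <;> rcases hπstar_pm k h with hp2 | hp2 <;>
            rw [hp1, hp2] <;> simp [this]
        · rw [(hπstar_sgn k hk h).1 hc]
          rcases hπ k h with hp1 | hp1 <;> rw [hp1]
          rw [hcdef] at hc; linarith
      -- unfold one step of the value function
      have hunfold : ∀ ρ : ∀ j, H j → ℝ,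
          wV X H concat P K lam ρ k h = wQ X H concat P K lam ρ k h (ρ k h) := by
        intro ρ
        unfold wV wQ
        rw [show K - k = (K - (k + 1)) + 1 from by omega]
        rfl
      rw [hunfold π, hunfold πstar]
      exact le_trans (hmono (π k h) (hπ k h)) hstep
  intro k hk h π hπ
  exact main (K - k) k rfl hk h π hπ

end
end

section
/- Peeling lemma for policy estimation: for any three DTRs π, π', π'', any stage k ∈ {1,…,K−1}, and any history h⃗_k ∈ 𝓗_k, writing a_k = π_k(h⃗_k), the weighted value functions satisfy V^{π_k π'_{(k+1):K}}_{λ,k}(h⃗_k) − V^{π_k π''_{(k+1):K}}_{λ,k}(h⃗_k) ≤ sup_{p ∈ 𝒫_{h⃗_k, a_k}} ∫ [ V^{π'_{(k+1):K}}_{λ,k+1}(h⃗_k, a_k, r, x) − V^{π''_{(k+1):K}}_{λ,k+1}(h⃗_k, a_k, r, x) ] dp(r, x). (Supplementary peeling lemma.) -/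
open MeasureTheory

noncomputable section

/-- The DTR that acts according to `π1` at stage `k` and according to `π2` at the other
stages (only its behavior at stages `≥ k` matters for stage-`k` value functions). -/
def mixAt (H : ℕ → Type) (π1 π2 : ∀ k, H k → ℝ) (k : ℕ) : ∀ j, H j → ℝ :=
  fun j => if j = k then π1 j else π2 j

lemma wVal_congr (X : ℕ → Type) [∀ k, MeasurableSpace (X k)] (H : ℕ → Type)
    (concat : ∀ k, H k → ℝ → ℝ → X (k + 1) → H (k + 1))
    (P : ∀ k, H k → ℝ → Set (Measure (ℝ × X (k + 1))))
    (lam : ∀ k, H k → ℝ → ℝ) (π1 π2 : ∀ k, H k → ℝ) (fuel k : ℕ)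
    (hpq : ∀ j, k ≤ j → π1 j = π2 j) :
    wVal X H concat P lam π1 fuel k = wVal X H concat P lam π2 fuel k := by
  induction fuel generalizing k with
  | zero => rfl
  | succ n ih =>
    funext hh
    simp only [wVal, hpq k le_rfl, ih (k + 1) (fun j hj => hpq j (by omega))]

/-- Supplementary peeling lemma for policy estimation: for DTRs `π, π', π''` and any stage
`k ∈ {1,…,K−1}`, writing `a_k = π_k(h⃗_k)`,
`V^{π_k π'_{(k+1):K}}_{λ,k}(h⃗_k) − V^{π_k π''_{(k+1):K}}_{λ,k}(h⃗_k)
  ≤ sup_{p ∈ 𝒫_{h⃗_k,a_k}} ∫ [V^{π'}_{λ,k+1}(h⃗_k,a_k,r,x) − V^{π''}_{λ,k+1}(h⃗_k,a_k,r,x)] dp`. -/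
theorem peeling_policy_estimation
    (X : ℕ → Type) [∀ k, MeasurableSpace (X k)] (H : ℕ → Type)
    (concat : ∀ k, H k → ℝ → ℝ → X (k + 1) → H (k + 1))
    (P : ∀ k, H k → ℝ → Set (Measure (ℝ × X (k + 1))))
    (K : ℕ) (lam : ∀ k, H k → ℝ → ℝ)
    (hlam : ∀ k (h : H k) (a : ℝ), 0 ≤ lam k h a ∧ lam k h a ≤ 1)
    (hPne : ∀ k (h : H k) (a : ℝ), a = 1 ∨ a = -1 → (P k h a).Nonempty)
    (hPprob : ∀ k (h : H k) (a : ℝ), ∀ p ∈ P k h a, IsProbabilityMeasure p)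
    (hInt : ∀ (π : ∀ k, H k → ℝ) k (h : H k) (a : ℝ), ∀ p ∈ P k h a,
      Integrable (fun q : ℝ × X (k + 1) =>
        q.1 + wV X H concat P K lam π (k + 1) (concat k h a q.1 q.2)) p)
    (hBddB : ∀ (π : ∀ k, H k → ℝ) k (h : H k) (a : ℝ),
      BddBelow (contInt X H concat k h a (wV X H concat P K lam π (k + 1)) '' P k h a))
    (hBddA : ∀ (π : ∀ k, H k → ℝ) k (h : H k) (a : ℝ),
      BddAbove (contInt X H concat k h a (wV X H concat P K lam π (k + 1)) '' P k h a))
    (π π' π'' : ∀ k, H k → ℝ)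
    (hπ : ∀ k (h : H k), π k h = 1 ∨ π k h = -1)
    (hπ' : ∀ k (h : H k), π' k h = 1 ∨ π' k h = -1)
    (hπ'' : ∀ k (h : H k), π'' k h = 1 ∨ π'' k h = -1)
    (k : ℕ) (hk : k + 1 < K) (h : H k) :
    wV X H concat P K lam (mixAt H π π' k) k h
        - wV X H concat P K lam (mixAt H π π'' k) k h
      ≤ sSup ((fun p : Measure (ℝ × X (k + 1)) =>
          ∫ q, (wV X H concat P K lam π' (k + 1) (concat k h (π k h) q.1 q.2)
            - wV X H concat P K lam π'' (k + 1) (concat k h (π k h) q.1 q.2)) ∂p)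
          '' P k h (π k h)) := by
  set a := π k h with ha
  set V1 := wV X H concat P K lam π' (k + 1) with hV1
  set V2 := wV X H concat P K lam π'' (k + 1) with hV2
  set S := sSup ((fun p : Measure (ℝ × X (k + 1)) =>
      ∫ q, (V1 (concat k h a q.1 q.2) - V2 (concat k h a q.1 q.2)) ∂p) '' P k h a) with hS
  have hPneK : (P k h a).Nonempty := hPne k h a (hπ k h)
  -- key: the difference integral equals difference of contInts
  have key : ∀ p ∈ P k h a,
      (∫ q, (V1 (concat k h a q.1 q.2) - V2 (concat k h a q.1 q.2)) ∂p)
        = contInt X H concat k h a V1 p - contInt X H concat k h a V2 p := by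
    intro p hp
    have h1 := hInt π' k h a p hp
    have h2 := hInt π'' k h a p hp
    have heq : (fun q : ℝ × X (k + 1) =>
        V1 (concat k h a q.1 q.2) - V2 (concat k h a q.1 q.2))
        = fun q : ℝ × X (k + 1) =>
          (q.1 + V1 (concat k h a q.1 q.2)) - (q.1 + V2 (concat k h a q.1 q.2)) := by
      funext q; ring
    rw [heq, integral_sub h1 h2]; rfl
  -- boundedness of the difference set
  have hBddS : BddAbove ((fun p : Measure (ℝ × X (k + 1)) =>
      ∫ q, (V1 (concat k h a q.1 q.2) - V2 (concat k h a q.1 q.2)) ∂p) '' P k h a) := by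
    refine ⟨QHigh X H concat P k h a V1 - QLow X H concat P k h a V2, ?_⟩
    rintro y ⟨p, hp, rfl⟩
    dsimp only
    rw [key p hp]
    have h1 : contInt X H concat k h a V1 p ≤ QHigh X H concat P k h a V1 :=
      le_csSup (hBddA π' k h a) ⟨p, hp, rfl⟩
    have h2 : QLow X H concat P k h a V2 ≤ contInt X H concat k h a V2 p :=
      csInf_le (hBddB π'' k h a) ⟨p, hp, rfl⟩
    linarith
  have hle : ∀ p ∈ P k h a,
      contInt X H concat k h a V1 p ≤ contInt X H concat k h a V2 p + S := by
    intro p hp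
    have : (∫ q, (V1 (concat k h a q.1 q.2) - V2 (concat k h a q.1 q.2)) ∂p) ≤ S :=
      le_csSup hBddS ⟨p, hp, rfl⟩
    rw [key p hp] at this; linarith
  -- QLow comparison
  have hQLow : QLow X H concat P k h a V1 ≤ QLow X H concat P k h a V2 + S := by
    have : QLow X H concat P k h a V1 - S ≤ QLow X H concat P k h a V2 := by
      refine le_csInf (hPneK.image _) ?_
      rintro b ⟨p, hp, rfl⟩
      have h1 : QLow X H concat P k h a V1 ≤ contInt X H concat k h a V1 p :=
        csInf_le (hBddB π' k h a) ⟨p, hp, rfl⟩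
      have h2 := hle p hp
      linarith
    linarith
  -- QHigh comparison
  have hQHigh : QHigh X H concat P k h a V1 ≤ QHigh X H concat P k h a V2 + S := by
    refine csSup_le (hPneK.image _) ?_
    rintro b ⟨p, hp, rfl⟩
    have h2 : contInt X H concat k h a V2 p ≤ QHigh X H concat P k h a V2 :=
      le_csSup (hBddA π'' k h a) ⟨p, hp, rfl⟩
    have := hle p hp
    linarith
  -- unfold the value functions
  have hKk : K - k = (K - (k + 1)) + 1 := by omega
  have hmix1 : wVal X H concat P lam (mixAt H π π' k) (K - (k + 1)) (k + 1)
      = fun hh => V1 hh := by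
    rw [wVal_congr X H concat P lam (mixAt H π π' k) π' (K - (k + 1)) (k + 1)
      (fun j hj => by simp [mixAt, Nat.ne_of_gt hj])]
    rfl
  have hmix2 : wVal X H concat P lam (mixAt H π π'' k) (K - (k + 1)) (k + 1)
      = fun hh => V2 hh := by
    rw [wVal_congr X H concat P lam (mixAt H π π'' k) π'' (K - (k + 1)) (k + 1)
      (fun j hj => by simp [mixAt, Nat.ne_of_gt hj])]
    rfl
  have hact : mixAt H π π' k k h = a := by simp [mixAt, ha]
  have hact2 : mixAt H π π'' k k h = a := by simp [mixAt, ha]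
  have hL : wV X H concat P K lam (mixAt H π π' k) k h
      = lam k h a * QLow X H concat P k h a V1
        + (1 - lam k h a) * QHigh X H concat P k h a V1 := by
    rw [wV, hKk]
    simp only [wVal, hact, hmix1]
  have hR : wV X H concat P K lam (mixAt H π π'' k) k h
      = lam k h a * QLow X H concat P k h a V2
        + (1 - lam k h a) * QHigh X H concat P k h a V2 := by
    rw [wV, hKk]
    simp only [wVal, hact2, hmix2]
  rw [hL, hR]
  obtain ⟨hl0, hl1⟩ := hlam k h a
  nlinarith [mul_le_mul_of_nonneg_left hQLow hl0,
    mul_le_mul_of_nonneg_left hQHigh (by linarith : (0:ℝ) ≤ 1 - lam k h a)]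

end
end
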